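/- arXiv:1011.0774 — 9 statements merged into one kernel-verified Lean document; each statement's English description precedes it below -/
import Mathlib

section
/- Let G be a connected simple graph on a finite vertex set V, let C ⊆ V be a clique, let f ∈ C be a loyal follower of C, and let l ∈ C with l ≠ f. Then for every vertex u ≠ f, d(l,u) ≤ d(f,u). -/
/-- Let G be a connected simple graph on a finite vertex set V, let C ⊆ V be a
clique, let f ∈ C be a loyal follower of C (every neighbor of f lies in C), and let l ∈ C with
l ≠ f. Then for every vertex u ≠ f, d(l,u) ≤ d(f,u). -/
theorem leader_dist_le_follower_dist {V : Type*} [Fintype V] (G : SimpleGraph V)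
    (hconn : G.Connected) (C : Set V) (hC : G.IsClique C)
    (f : V) (hfC : f ∈ C) (hloyal : ∀ u : V, G.Adj f u → u ∈ C)
    (l : V) (hlC : l ∈ C) (hlf : l ≠ f) :
    ∀ u : V, u ≠ f → G.dist l u ≤ G.dist f u := by
  intro u hu
  obtain ⟨p, hp⟩ := hconn.exists_walk_length_eq_dist f u
  cases p with
  | nil => exact absurd rfl hu.symm
  | cons h q =>
    rename_i w
    have hwu : G.dist w u ≤ q.length := SimpleGraph.dist_le q
    have hlw : G.dist l w ≤ 1 := by
      by_cases hlww : l = w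
      · rw [hlww, SimpleGraph.dist_self]; omega
      · exact le_of_eq (SimpleGraph.dist_eq_one_iff_adj.mpr (hC hlC (hloyal w h) hlww))
    calc G.dist l u ≤ G.dist l w + G.dist w u := hconn.dist_triangle
      _ ≤ 1 + q.length := by omega
      _ = G.dist f u := by simp at hp; omega
end

section
/- Let G be a connected simple graph on a finite vertex set V, let C ⊆ V be a clique, let f ∈ C be a loyal follower of C, and let l ∈ C with l ≠ f. Then for every vertex u ∉ C, either d(f,u) = d(l,u) or d(f,u) = d(l,u) + 1. -/
/-- Let G be a connected simple graph on a finite vertex set V, let C ⊆ V be a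
clique, let f ∈ C be a loyal follower of C, and let l ∈ C with l ≠ f. Then for every vertex
u ∉ C, either d(f,u) = d(l,u) or d(f,u) = d(l,u) + 1. -/
theorem follower_dist_eq_or_succ {V : Type*} [Fintype V] (G : SimpleGraph V)
    (hconn : G.Connected) (C : Set V) (hC : G.IsClique C)
    (f : V) (hfC : f ∈ C) (hloyal : ∀ u : V, G.Adj f u → u ∈ C)
    (l : V) (hlC : l ∈ C) (hlf : l ≠ f) :
    ∀ u : V, u ∉ C → G.dist f u = G.dist l u ∨ G.dist f u = G.dist l u + 1 := by
  intro u huC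
  have hfl : G.Adj f l := hC hfC hlC (Ne.symm hlf)
  -- upper bound: dist f u ≤ dist l u + 1
  obtain ⟨q, hq⟩ := hconn.exists_walk_length_eq_dist l u
  have hup : G.dist f u ≤ G.dist l u + 1 := by
    have := SimpleGraph.dist_le (SimpleGraph.Walk.cons hfl q)
    simpa [hq, Nat.add_comm] using this
  -- lower bound: dist l u ≤ dist f u
  obtain ⟨p, hp⟩ := hconn.exists_walk_length_eq_dist f u
  have hfu : f ≠ u := fun h => huC (h ▸ hfC)
  cases p with
  | nil => exact absurd rfl hfu
  | @cons _ c _ hadj p' =>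
    have hcC : c ∈ C := hloyal c hadj
    have hcu : G.dist c u ≤ p'.length := SimpleGraph.dist_le p'
    have hlc : G.dist l c ≤ 1 := by
      rcases eq_or_ne l c with h | h
      · simp [h, SimpleGraph.dist_self]
      · exact le_of_eq (SimpleGraph.dist_eq_one_iff_adj.mpr (hC hlC hcC h))
    have htri : G.dist l u ≤ G.dist l c + G.dist c u := hconn.dist_triangle
    simp only [SimpleGraph.Walk.length_cons] at hp
    omega
end

section
/- Let G be a connected simple graph on a finite vertex set V, let C ⊆ V be a clique, let f ∈ C be a loyal follower of C, and let l ∈ C be a vertex that is adjacent to at least one vertex outside of C. Then D(f) > D(l), i.e., the distance centrality of the loyal follower strictly exceeds the distance centrality of the leader. -/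
/-- Let G be a connected simple graph on a finite vertex set V, let C ⊆ V be a
clique, let f ∈ C be a loyal follower of C, and let l ∈ C be adjacent to at least one vertex
outside of C. Then D(f) > D(l), where D(v) = Σ_{u∈V} d(v,u) is the distance centrality. -/
theorem follower_centrality_gt_leader {V : Type*} [Fintype V] (G : SimpleGraph V)
    (hconn : G.Connected) (C : Set V) (hC : G.IsClique C)
    (f : V) (hfC : f ∈ C) (hloyal : ∀ u : V, G.Adj f u → u ∈ C)
    (l : V) (hlC : l ∈ C) (hout : ∃ u : V, u ∉ C ∧ G.Adj l u) :
    (∑ u : V, G.dist f u) > (∑ u : V, G.dist l u) := by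
  classical
  obtain ⟨x, hxC, hlx⟩ := hout
  have hfl : f ≠ l := by
    rintro rfl
    exact hxC (hloyal x hlx)
  have hadj_fl : G.Adj f l := hC hfC hlC hfl
  have hxf : x ≠ f := fun h => hxC (h ▸ hfC)
  have hxl : x ≠ l := fun h => hxC (h ▸ hlC)
  -- key pointwise inequality for u ≠ f
  have key : ∀ u : V, u ≠ f → G.dist l u ≤ G.dist f u := by
    intro u hu
    obtain ⟨p, hp⟩ := hconn.exists_walk_length_eq_dist f u
    cases p with
    | nil => exact absurd rfl hu.symm
    | cons h q =>
      rename_i w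
      have hwC : w ∈ C := hloyal w h
      have hlw : G.dist l w ≤ 1 := by
        by_cases hwl : w = l
        · simp [hwl, SimpleGraph.dist_self]
        · exact le_of_eq ((SimpleGraph.dist_eq_one_iff_adj).2 (hC hlC hwC (Ne.symm hwl)))
      calc G.dist l u ≤ G.dist l w + G.dist w u := hconn.dist_triangle
        _ ≤ 1 + q.length := add_le_add hlw (SimpleGraph.dist_le q)
        _ = G.dist f u := by simpa [add_comm] using hp
  have hfx2 : 2 ≤ G.dist f x := by
    have h1 : 1 ≤ G.dist f x := hconn.pos_dist_of_ne (Ne.symm hxf)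
    rcases lt_or_eq_of_le h1 with h | h
    · exact h
    · exact absurd (SimpleGraph.dist_eq_one_iff_adj.1 h.symm) fun ha => hxC (hloyal x ha)
  have hdfl : G.dist f l = 1 := SimpleGraph.dist_eq_one_iff_adj.2 hadj_fl
  have hdlf : G.dist l f = 1 := SimpleGraph.dist_eq_one_iff_adj.2 hadj_fl.symm
  have hdlx : G.dist l x = 1 := SimpleGraph.dist_eq_one_iff_adj.2 hlx
  set s : Finset V := {f, l, x} with hs
  have hsub : s ⊆ Finset.univ := Finset.subset_univ s
  have hsplit : ∀ F : V → ℕ,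
      ∑ u : V, F u = ∑ u ∈ Finset.univ \ s, F u + ∑ u ∈ s, F u :=
    fun F => (Finset.sum_sdiff hsub).symm
  rw [hsplit (G.dist f ·), hsplit (G.dist l ·)]
  have hrest : ∑ u ∈ Finset.univ \ s, G.dist l u ≤ ∑ u ∈ Finset.univ \ s, G.dist f u := by
    apply Finset.sum_le_sum
    intro u hu
    apply key
    intro h
    simp [hs, h] at hu
  have hsl : ∑ u ∈ s, G.dist l u = 2 := by
    rw [hs]
    rw [Finset.sum_insert (by simp [hfl, hxf, Ne.symm hxf]),
      Finset.sum_insert (by simp [hxl, Ne.symm hxl]), Finset.sum_singleton]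
    simp [hdlf, hdlx, SimpleGraph.dist_self]
  have hsf : 3 ≤ ∑ u ∈ s, G.dist f u := by
    rw [hs]
    rw [Finset.sum_insert (by simp [hfl, hxf, Ne.symm hxf]),
      Finset.sum_insert (by simp [hxl, Ne.symm hxl]), Finset.sum_singleton]
    simp only [SimpleGraph.dist_self, hdfl]
    omega
  omega
end

section
/- Let G be a connected simple graph on a finite vertex set V, let C ⊆ V be a clique, and let f₁, f₂ ∈ C be two loyal followers of C. Then D(f₁) = D(f₂), i.e., any two loyal followers of the same community have equal distance centrality. -/
private lemma follower_dist_le {V : Type*} [DecidableEq V] (G : SimpleGraph V)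
    (hconn : G.Connected) (C : Set V) (hC : G.IsClique C)
    (f₁ : V) (hf₁C : f₁ ∈ C) (hloyal₁ : ∀ u : V, G.Adj f₁ u → u ∈ C)
    (f₂ : V) (hf₂C : f₂ ∈ C)
    (u : V) (hu : u ≠ f₁) : G.dist f₂ u ≤ G.dist f₁ u := by
  obtain ⟨p, hp⟩ := (hconn f₁ u).exists_walk_length_eq_dist
  cases p with
  | nil => exact absurd rfl hu.symm
  | @cons _ w _ h q =>
    by_cases hw : w = f₂
    · subst w
      calc G.dist f₂ u ≤ q.length := SimpleGraph.dist_le q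
        _ ≤ (SimpleGraph.Walk.cons h q).length := by simp
        _ = G.dist f₁ u := hp
    · have hadj : G.Adj f₂ w := hC hf₂C (hloyal₁ w h) (fun e => hw e.symm)
      calc G.dist f₂ u ≤ (SimpleGraph.Walk.cons hadj q).length :=
            SimpleGraph.dist_le _
        _ = (SimpleGraph.Walk.cons h q).length := by simp
        _ = G.dist f₁ u := hp

/-- Let G be a connected simple graph on a finite vertex set V, let C ⊆ V be a
clique, and let f₁, f₂ ∈ C be two loyal followers of C. Then D(f₁) = D(f₂), i.e., any two loyal
followers of the same community have equal distance centrality D(v) = Σ_{u∈V} d(v,u). -/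
theorem followers_equal_centrality {V : Type*} [Fintype V] (G : SimpleGraph V)
    (hconn : G.Connected) (C : Set V) (hC : G.IsClique C)
    (f₁ : V) (hf₁C : f₁ ∈ C) (hloyal₁ : ∀ u : V, G.Adj f₁ u → u ∈ C)
    (f₂ : V) (hf₂C : f₂ ∈ C) (hloyal₂ : ∀ u : V, G.Adj f₂ u → u ∈ C) :
    (∑ u : V, G.dist f₁ u) = (∑ u : V, G.dist f₂ u) := by
  classical
  have key : ∀ u : V, u ≠ f₁ → u ≠ f₂ → G.dist f₁ u = G.dist f₂ u := fun u h1 h2 =>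
    le_antisymm (follower_dist_le G hconn C hC f₂ hf₂C hloyal₂ f₁ hf₁C u h2)
      (follower_dist_le G hconn C hC f₁ hf₁C hloyal₁ f₂ hf₂C u h1)
  rw [← Equiv.sum_comp (Equiv.swap f₁ f₂) (fun u => G.dist f₂ u)]
  refine Finset.sum_congr rfl fun u _ => ?_
  by_cases h1 : u = f₁
  · subst h1; simp [SimpleGraph.dist_self]
  by_cases h2 : u = f₂
  · subst h2; simp [SimpleGraph.dist_comm]
  · rw [Equiv.swap_apply_of_ne_of_ne h1 h2, key u h1 h2]
end

section
/- Let G be a connected simple graph on a finite vertex set V, let C ⊆ V be a clique, and let f ∈ C be a loyal follower of C. Then for every neighbor u of f, D(u) ≤ D(f). In particular, a loyal follower is never detected as a leader by the leader-detection rule (which declares v a leader when some neighbor u of v satisfies D(v) < D(u)). -/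
/-- Let G be a connected simple graph on a finite vertex set V, let C ⊆ V be a
clique, and let f ∈ C be a loyal follower of C. Then for every neighbor u of f, D(u) ≤ D(f),
where D(v) = Σ_{u∈V} d(v,u). So a loyal follower is never detected as a leader by the rule
that declares v a leader when some neighbor u of v satisfies D(v) < D(u). -/
theorem follower_is_local_max {V : Type*} [Fintype V] (G : SimpleGraph V)
    (hconn : G.Connected) (C : Set V) (hC : G.IsClique C)
    (f : V) (hfC : f ∈ C) (hloyal : ∀ u : V, G.Adj f u → u ∈ C) :
    ∀ u : V, G.Adj f u → (∑ w : V, G.dist u w) ≤ (∑ w : V, G.dist f w) := by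
  intro u hadj
  classical
  have key : ∀ w : V, w ≠ f → G.dist u w ≤ G.dist f w := by
    intro w hw
    obtain ⟨p, hp⟩ := hconn.exists_walk_length_eq_dist f w
    cases p with
    | nil => exact absurd rfl hw.symm
    | @cons _ x _ h q =>
      simp only [SimpleGraph.Walk.length_cons] at hp
      have hxw : G.dist x w ≤ q.length := SimpleGraph.dist_le q
      by_cases hux : u = x
      · subst hux; omega
      · have hadjux : G.Adj u x := hC (hloyal u hadj) (hloyal x h) hux
        have := hconn.dist_triangle (u := u) (v := x) (w := w)
        have h1 : G.dist u x = 1 := SimpleGraph.dist_eq_one_iff_adj.mpr hadjux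
        omega
  have hne : f ≠ u := hadj.ne
  calc ∑ w : V, G.dist u w ≤ ∑ w : V, G.dist f (Equiv.swap f u w) := by
        apply Finset.sum_le_sum
        intro w _
        by_cases h1 : w = f
        · subst h1
          rw [Equiv.swap_apply_left]
          rw [SimpleGraph.dist_comm]
        · by_cases h2 : w = u
          · subst h2
            rw [Equiv.swap_apply_right]
            simp [SimpleGraph.dist_self]
          · rw [Equiv.swap_apply_of_ne_of_ne h1 h2]
            exact key w h1
    _ = ∑ w : V, G.dist f w := Equiv.sum_comp (Equiv.swap f u) fun w => G.dist f w
end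

section
/- Let G be a connected simple graph on a finite vertex set V, let C ⊆ V be a clique containing at least one loyal follower, and let l ∈ C be a vertex adjacent to at least one vertex outside of C. Then there exists a neighbor u of l with D(l) < D(u); i.e., every leader is detected by the leader-detection rule (which declares v a leader when some neighbor u of v satisfies D(v) < D(u)). -/
open SimpleGraph Finset

/-- If `f ≠ w`, there is a neighbor `c` of `f` with `dist c w + 1 ≤ dist f w`. -/
lemma step_lemma {V : Type*} (G : SimpleGraph V) (hconn : G.Connected) {f w : V}
    (hne : f ≠ w) : ∃ c : V, G.Adj f c ∧ G.dist c w + 1 ≤ G.dist f w := by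
  obtain ⟨p, hp⟩ := hconn.exists_walk_length_eq_dist f w
  cases p with
  | nil => exact absurd rfl hne
  | cons h q =>
    refine ⟨_, h, ?_⟩
    rw [← hp, SimpleGraph.Walk.length_cons]
    have := SimpleGraph.dist_le q
    omega

/-- Let G be a connected simple graph on a finite vertex set V, let C ⊆ V be a
clique containing at least one loyal follower, and let l ∈ C be a vertex adjacent to at least
one vertex outside of C. Then there exists a neighbor u of l with D(l) < D(u); i.e., every
leader is detected by the leader-detection rule. -/
theorem leader_is_detected {V : Type*} [Fintype V] (G : SimpleGraph V)
    (hconn : G.Connected) (C : Set V) (hC : G.IsClique C)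
    (hfollower : ∃ f ∈ C, ∀ u : V, G.Adj f u → u ∈ C)
    (l : V) (hlC : l ∈ C) (hout : ∃ u : V, u ∉ C ∧ G.Adj l u) :
    ∃ u : V, G.Adj l u ∧ (∑ w : V, G.dist l w) < (∑ w : V, G.dist u w) := by
  classical
  obtain ⟨f, hfC, hfloyal⟩ := hfollower
  obtain ⟨u, huC, hlu⟩ := hout
  have hfl : f ≠ l := by rintro rfl; exact huC (hfloyal u hlu)
  have hadj : G.Adj l f := hC hlC hfC (Ne.symm hfl)
  refine ⟨f, hadj, ?_⟩
  -- key: for w ≠ f, dist l w ≤ dist f w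
  have key : ∀ w : V, w ≠ f → G.dist l w ≤ G.dist f w := by
    intro w hw
    obtain ⟨c, hfc, hc⟩ := step_lemma G hconn (Ne.symm hw)
    have hcC : c ∈ C := hfloyal c hfc
    have hlc : G.dist l c ≤ 1 := by
      rcases eq_or_ne l c with rfl | h
      · simp [SimpleGraph.dist_self]
      · exact le_of_eq ((SimpleGraph.dist_eq_one_iff_adj).mpr (hC hlC hcC h))
    calc G.dist l w ≤ G.dist l c + G.dist c w := hconn.dist_triangle
      _ ≤ 1 + G.dist c w := by omega
      _ ≤ G.dist f w := by omega
  have hufne : u ≠ f := fun h => huC (h ▸ hfC)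
  have hulne : u ≠ l := hlu.ne'
  -- special values
  have hlf1 : G.dist l f = 1 := SimpleGraph.dist_eq_one_iff_adj.mpr hadj
  have hfl1 : G.dist f l = 1 := SimpleGraph.dist_eq_one_iff_adj.mpr hadj.symm
  have hlu1 : G.dist l u = 1 := SimpleGraph.dist_eq_one_iff_adj.mpr hlu
  have hfu2 : 2 ≤ G.dist f u := by
    have h1 : G.dist f u ≠ 1 := by
      intro h
      exact huC (hfloyal u (SimpleGraph.dist_eq_one_iff_adj.mp h))
    have h0 : 0 < G.dist f u := hconn.pos_dist_of_ne hufne.symm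
    omega
  -- split sums over s = {l, f, u} and the rest
  have hsub : ({l, f, u} : Finset V) ⊆ Finset.univ := Finset.subset_univ _
  rw [← Finset.sum_sdiff hsub (f := fun w => G.dist l w),
      ← Finset.sum_sdiff hsub (f := fun w => G.dist f w)]
  have h1 : ∑ w ∈ Finset.univ \ {l, f, u}, G.dist l w ≤
      ∑ w ∈ Finset.univ \ {l, f, u}, G.dist f w := by
    apply Finset.sum_le_sum
    intro w hw
    simp only [Finset.mem_sdiff, Finset.mem_insert, Finset.mem_singleton] at hw
    exact key w (fun h => hw.2 (Or.inr (Or.inl h)))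
  have h2 : ∑ w ∈ ({l, f, u} : Finset V), G.dist l w <
      ∑ w ∈ ({l, f, u} : Finset V), G.dist f w := by
    have hnot : l ∉ ({f, u} : Finset V) := by
      simp [Ne.symm hfl, Ne.symm hulne]
    rw [Finset.sum_insert hnot, Finset.sum_insert hnot,
      Finset.sum_pair (Ne.symm hufne), Finset.sum_pair (Ne.symm hufne)]
    have e1 : G.dist f f = 0 := SimpleGraph.dist_self
    have e2 : G.dist l l = 0 := SimpleGraph.dist_self
    omega
  exact add_lt_add_of_le_of_lt h1 h2
end

section
/- Let G be a connected simple graph on a finite vertex set V, let C ⊆ V be a clique containing at least one loyal follower, and let v ∈ C. Then v has a neighbor u with D(v) < D(u) if and only if v has a neighbor lying outside of C. That is, the distance-centrality detection rule identifies exactly the leaders (vertices with a neighbor outside their community) and never the loyal followers. -/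
open SimpleGraph

private lemma key_dist {V : Type*} {G : SimpleGraph V} (hconn : G.Connected) {C : Set V}
    (hC : G.IsClique C) {f : V} (hf : ∀ u : V, G.Adj f u → u ∈ C)
    {u : V} (huC : u ∈ C) {w : V} (hw : w ≠ f) : G.dist u w ≤ G.dist f w := by
  obtain ⟨p, hp⟩ := (hconn f w).exists_walk_length_eq_dist
  cases p with
  | nil => exact absurd rfl hw.symm
  | @cons _ n _ h q =>
      have hnC : n ∈ C := hf n h
      have hun : G.dist u n ≤ 1 := by
        rcases eq_or_ne u n with rfl | hne
        · simp [SimpleGraph.dist_self]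
        · exact le_of_eq (SimpleGraph.dist_eq_one_iff_adj.mpr (hC huC hnC hne))
      have hnw : G.dist n w ≤ q.length := SimpleGraph.dist_le q
      calc G.dist u w ≤ G.dist u n + G.dist n w := hconn.dist_triangle
        _ ≤ 1 + q.length := Nat.add_le_add hun hnw
        _ = G.dist f w := by simpa [Nat.add_comm] using hp

private lemma key_swap {V : Type*} [DecidableEq V] {G : SimpleGraph V} (hconn : G.Connected) {C : Set V}
    (hC : G.IsClique C) {f : V} (hf : ∀ u : V, G.Adj f u → u ∈ C)
    {u : V} (huC : u ∈ C) (w : V) :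
    G.dist u (Equiv.swap u f w) ≤ G.dist f w := by
  classical
  rcases eq_or_ne w u with rfl | hwu
  · rw [Equiv.swap_apply_left, SimpleGraph.dist_comm]
  rcases eq_or_ne w f with rfl | hwf
  · simp [Equiv.swap_apply_right, SimpleGraph.dist_self]
  · rw [Equiv.swap_apply_of_ne_of_ne hwu hwf]
    exact key_dist hconn hC hf huC hwf

private lemma key_sum {V : Type*} [Fintype V] {G : SimpleGraph V} (hconn : G.Connected)
    {C : Set V} (hC : G.IsClique C) {f : V}
    (hf : ∀ u : V, G.Adj f u → u ∈ C) {u : V} (huC : u ∈ C) :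
    (∑ w : V, G.dist u w) ≤ ∑ w : V, G.dist f w := by
  classical
  rw [← Equiv.sum_comp (Equiv.swap u f) (fun w => G.dist u w)]
  exact Finset.sum_le_sum fun w _ => key_swap hconn hC hf huC w

/-- Let G be a connected simple graph on a finite vertex set V, let C ⊆ V be a
clique containing at least one loyal follower, and let v ∈ C. Then v has a neighbor u with
D(v) < D(u) if and only if v has a neighbor lying outside of C. -/
theorem detection_rule_characterizes_leaders {V : Type*} [Fintype V] (G : SimpleGraph V)
    (hconn : G.Connected) (C : Set V) (hC : G.IsClique C)
    (hfollower : ∃ f ∈ C, ∀ u : V, G.Adj f u → u ∈ C)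
    (v : V) (hvC : v ∈ C) :
    (∃ u : V, G.Adj v u ∧ (∑ w : V, G.dist v w) < (∑ w : V, G.dist u w)) ↔
      (∃ u : V, G.Adj v u ∧ u ∉ C) := by
  classical
  obtain ⟨f, hfC, hf⟩ := hfollower
  constructor
  · rintro ⟨u, hadj, hlt⟩
    by_contra hout
    push_neg at hout
    -- then v is a loyal follower
    have hv : ∀ x : V, G.Adj v x → x ∈ C := fun x hx => hout x hx
    exact absurd (key_sum hconn hC hv (hout u hadj)) (Nat.not_le.mpr hlt)
  · rintro ⟨u, hadj, huC⟩
    have hvf : v ≠ f := by rintro rfl; exact huC (hf u hadj)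
    refine ⟨f, hC hvC hfC hvf, ?_⟩
    rw [← Equiv.sum_comp (Equiv.swap v f) (fun w => G.dist v w)]
    have huv : u ≠ v := fun h => (h ▸ hadj).ne' rfl
    have huf : u ≠ f := fun h => huC (h ▸ hfC)
    refine Finset.sum_lt_sum (fun w _ => key_swap hconn hC hf hvC w) ⟨u, Finset.mem_univ u, ?_⟩
    rw [Equiv.swap_apply_of_ne_of_ne huv huf]
    have h1 : G.dist v u = 1 := SimpleGraph.dist_eq_one_iff_adj.mpr hadj
    have h2 : G.dist f u ≠ 1 := fun h =>
      huC (hf u (SimpleGraph.dist_eq_one_iff_adj.mp h))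
    have h0 : 0 < G.dist f u := hconn.pos_dist_of_ne (Ne.symm huf)
    omega
end

section
/- Let G be a simple graph on a finite vertex set V, and suppose P = {C_1, …, C_k} and P' = {C'_1, …, C'_m} are both community structures on G, i.e., partitions of V into nonempty sets each of which is a clique and contains a loyal follower. Then P = P' (the community structure of a graph, when it exists, is unique). -/
/-- A community structure on `G`: a partition of the vertex set into nonempty sets, each of
which is a clique and contains a loyal follower (a vertex all of whose neighbors lie in
the set). -/
def IsCommunityStructure {V : Type*} (G : SimpleGraph V) (P : Set (Set V)) : Prop :=
  Setoid.IsPartition P ∧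
    ∀ C ∈ P, G.IsClique C ∧ ∃ f ∈ C, ∀ u : V, G.Adj f u → u ∈ C

lemma community_structure_subset {V : Type*} (G : SimpleGraph V)
    (P P' : Set (Set V))
    (hP : IsCommunityStructure G P) (hP' : IsCommunityStructure G P') :
    P' ⊆ P := by
  intro C' hC'
  obtain ⟨hclique', f', hf'C', hf'loyal⟩ := hP'.2 C' hC'
  obtain ⟨C, ⟨hCP, hf'C⟩, _⟩ := hP.1.2 f'
  obtain ⟨hclique, f, hfC, hfloyal⟩ := hP.2 C hCP
  have hCC' : C ⊆ C' := by
    intro u hu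
    rcases eq_or_ne u f' with rfl | hne
    · exact hf'C'
    · exact hf'loyal u (hclique hf'C hu (Ne.symm hne))
  have hC'C : C' ⊆ C := by
    intro u hu
    rcases eq_or_ne u f with rfl | hne
    · exact hfC
    · exact hfloyal u (hclique' (hCC' hfC) hu (Ne.symm hne))
  have : C' = C := le_antisymm hC'C hCC'
  rw [this]; exact hCP

/-- Let G be a simple graph on a finite vertex set V, and suppose P and P' are
both community structures on G. Then P = P': the community structure of a graph, when it
exists, is unique. -/
theorem community_structure_unique {V : Type*} [Fintype V] (G : SimpleGraph V)
    (P P' : Set (Set V))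
    (hP : IsCommunityStructure G P) (hP' : IsCommunityStructure G P') :
    P = P' := by
  exact le_antisymm (community_structure_subset G P' P hP' hP)
    (community_structure_subset G P P' hP hP')
end

section
/- Let G be a connected simple graph on a finite vertex set V, and let P = {C_1, …, C_k} be a community structure on G, i.e., a partition of V into nonempty sets each of which is a clique and contains a loyal follower. Then P equals the collection of closed neighborhoods of the vertices that are local maxima of distance centrality: P = { {f} ∪ N(f) : f ∈ V and D(u) ≤ D(f) for every neighbor u of f }, where N(f) denotes the set of neighbors of f. In particular, the communities can be recovered exactly from the graph via distance centrality. -/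
/-- Pointwise step: if `u` is a neighbor of `f` and every neighbor of `f` is either `u` or
adjacent to `u`, then for every `w ∉ {f, u}` we have `d(u,w) ≤ d(f,w)`. -/
lemma dist_step {V : Type*} {G : SimpleGraph V} (hconn : G.Connected) {f u : V}
    (hnb : ∀ v : V, G.Adj f v → v = u ∨ G.Adj u v) {w : V} (hwf : w ≠ f) :
    G.dist u w ≤ G.dist f w := by
  obtain ⟨p, hp⟩ := hconn.exists_walk_length_eq_dist f w
  cases p with
  | nil => exact absurd rfl hwf
  | cons h q =>
    rename_i v
    have h1 : G.dist v w ≤ q.length := SimpleGraph.dist_le q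
    have h2 : G.dist u v ≤ 1 := by
      rcases hnb v h with rfl | ha
      · simp [SimpleGraph.dist_self]
      · exact le_of_eq (SimpleGraph.dist_eq_one_iff_adj.mpr ha)
    calc G.dist u w ≤ G.dist u v + G.dist v w := hconn.dist_triangle
      _ ≤ 1 + q.length := add_le_add h2 h1
      _ = (SimpleGraph.Walk.cons h q).length := by simp [SimpleGraph.Walk.length_cons]; ring
      _ = G.dist f w := hp

/-- Termwise comparison after swapping `u` and `f`. -/
lemma dist_swap_le {V : Type*} [DecidableEq V] {G : SimpleGraph V} (hconn : G.Connected)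
    {f u : V} (hfu : G.Adj f u) (hnb : ∀ v : V, G.Adj f v → v = u ∨ G.Adj u v) (w : V) :
    G.dist u w ≤ G.dist f (Equiv.swap u f w) := by
  by_cases hwu : w = u
  · subst hwu; simp [Equiv.swap_apply_left, SimpleGraph.dist_self]
  by_cases hwf : w = f
  · subst hwf
    rw [Equiv.swap_apply_right, SimpleGraph.dist_comm]
  · rw [Equiv.swap_apply_of_ne_of_ne hwu hwf]
    exact dist_step hconn hnb hwf

lemma sum_dist_le {V : Type*} [Fintype V] {G : SimpleGraph V} (hconn : G.Connected)
    {f u : V} (hfu : G.Adj f u) (hnb : ∀ v : V, G.Adj f v → v = u ∨ G.Adj u v) :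
    (∑ w : V, G.dist u w) ≤ ∑ w : V, G.dist f w := by
  classical
  calc (∑ w : V, G.dist u w) ≤ ∑ w : V, G.dist f (Equiv.swap u f w) :=
        Finset.sum_le_sum fun w _ => dist_swap_le hconn hfu hnb w
    _ = ∑ w : V, G.dist f w := Equiv.sum_comp (Equiv.swap u f) (fun w => G.dist f w)

/-- Let G be a connected simple graph on a finite vertex set V, and let P be a
community structure on G. Then P equals the collection of closed neighborhoods of the vertices
that are local maxima of the distance centrality D(v) = Σ_{u∈V} d(v,u):
P = { {f} ∪ N(f) : f ∈ V, D(u) ≤ D(f) for every neighbor u of f }. -/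
theorem community_structure_recovered {V : Type*} [Fintype V] (G : SimpleGraph V)
    (hconn : G.Connected) (P : Set (Set V)) (hP : IsCommunityStructure G P) :
    P = {S : Set V | ∃ f : V,
          (∀ u : V, G.Adj f u → (∑ w : V, G.dist u w) ≤ (∑ w : V, G.dist f w)) ∧
          S = {f} ∪ G.neighborSet f} := by
  classical
  ext S
  constructor
  · intro hS
    obtain ⟨hclq, f, hfC, hloyal⟩ := hP.2 S hS
    have hnb : ∀ u : V, G.Adj f u → ∀ v : V, G.Adj f v → v = u ∨ G.Adj u v := by
      intro u hu v hv
      by_cases h : v = u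
      · exact Or.inl h
      · exact Or.inr (hclq (hloyal u hu) (hloyal v hv) (fun he => h he.symm))
    refine ⟨f, fun u hu => sum_dist_le hconn hu (hnb u hu), ?_⟩
    ext x
    simp only [Set.mem_union, Set.mem_singleton_iff, SimpleGraph.mem_neighborSet]
    constructor
    · intro hx
      by_cases hxf : x = f
      · exact Or.inl hxf
      · exact Or.inr (hclq hfC hx (fun he => hxf he.symm))
    · rintro (rfl | h)
      · exact hfC
      · exact hloyal x h
  · rintro ⟨f, hmax, rfl⟩
    obtain ⟨C, ⟨hCP, hfC⟩, -⟩ := hP.1.2 f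
    obtain ⟨hclq, g, hgC, hgloyal⟩ := hP.2 C hCP
    have hnbC : ∀ x y : V, x ∈ C → y ∈ C → x = y ∨ G.Adj x y := by
      intro x y hx hy
      by_cases h : x = y
      · exact Or.inl h
      · exact Or.inr (hclq hx hy h)
    -- Every neighbor of f lies in C.
    have hNf : ∀ x : V, G.Adj f x → x ∈ C := by
      by_cases hfg : f = g
      · subst hfg; exact hgloyal
      · -- f is adjacent to g
        have hgf : G.Adj g f := hclq hgC hfC (Ne.symm hfg)
        have hnb : ∀ v : V, G.Adj g v → v = f ∨ G.Adj f v := by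
          intro v hv
          rcases hnbC f v hfC (hgloyal v hv) with h | h
          · exact Or.inl h.symm
          · exact Or.inr h
        have h1 : (∑ w : V, G.dist f w) ≤ ∑ w : V, G.dist g w :=
          sum_dist_le hconn hgf hnb
        have h2 : (∑ w : V, G.dist g w) ≤ ∑ w : V, G.dist f w := hmax g hgf.symm
        have heq : (∑ w : V, G.dist f w) = ∑ w : V, G.dist g (Equiv.swap f g w) := by
          rw [Equiv.sum_comp (Equiv.swap f g) (fun w => G.dist g w)]
          exact le_antisymm h1 h2
        have hterm : ∀ w : V, G.dist f w = G.dist g (Equiv.swap f g w) := by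
          intro w
          exact (Finset.sum_eq_sum_iff_of_le
            (fun w _ => dist_swap_le hconn hgf hnb w)).mp heq w (Finset.mem_univ w)
        intro x hfx
        by_cases hxg : x = g
        · subst hxg; exact hgC
        by_cases hxf : x = f
        · subst hxf; exact hfC
        · have := hterm x
          rw [Equiv.swap_apply_of_ne_of_ne hxf hxg] at this
          have h1 : G.dist f x = 1 := SimpleGraph.dist_eq_one_iff_adj.mpr hfx
          have : G.dist g x = 1 := by omega
          exact hgloyal x (SimpleGraph.dist_eq_one_iff_adj.mp this)
    have : ({f} : Set V) ∪ G.neighborSet f = C := by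
      ext x
      simp only [Set.mem_union, Set.mem_singleton_iff, SimpleGraph.mem_neighborSet]
      constructor
      · rintro (rfl | h)
        · exact hfC
        · exact hNf x h
      · intro hx
        by_cases hxf : x = f
        · exact Or.inl hxf
        · exact Or.inr (hclq hfC hx (fun he => hxf he.symm))
    rw [this]
    exact hCP
end
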